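/- arXiv:2604.06065 — 2 statements merged into one kernel-verified Lean document; each statement's English description precedes it below -/
import Mathlib

section
/- Let μ be a probability measure on ℝ^d and C_LS > 0. Assume μ satisfies the logarithmic Sobolev inequality: for every C¹ function h : ℝ^d → (0,∞) such that h², h² log h² and ‖∇h‖² are μ-integrable, ∫ h² log( h² / ∫ h² dμ ) dμ ≤ C_LS ∫ ‖∇h‖² dμ. Then for every L-Lipschitz μ-integrable function g : ℝ^d → ℝ and every λ ∈ ℝ, ∫ exp( λ ( g(x) − ∫ g dμ ) ) dμ(x) ≤ exp( (C_LS L² / 4) λ² ). -/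
open MeasureTheory Set
open scoped ENNReal

noncomputable section

open Filter Real Convolution intervalIntegral
open scoped Convolution


lemma herbst_ode {G G' : ℝ → ℝ} {m a t : ℝ} (ht : 0 < t)
    (hG : ∀ s, HasDerivAt G (G' s) s)
    (hG0 : G 0 = 0) (hG'0 : G' 0 = m)
    (hineq : ∀ s, 0 < s → s ≤ t → s * G' s - G s ≤ a * s ^ 2) :
    G t ≤ m * t + a * t ^ 2 := by
  set φ : ℝ → ℝ := fun s => G s / s - a * s with hφ
  have hder : ∀ s : ℝ, s ≠ 0 → HasDerivAt φ ((G' s * s - G s * 1) / s ^ 2 - a) s := by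
    intro s hs
    exact ((hG s).div (hasDerivAt_id s) hs).sub (by simpa using (hasDerivAt_id s).const_mul a)
  have hanti : AntitoneOn φ (Ioc 0 t) := by
    apply antitoneOn_of_deriv_nonpos (convex_Ioc 0 t)
    · intro s hs
      exact ((hder s (ne_of_gt hs.1)).continuousAt).continuousWithinAt
    · intro s hs
      rw [interior_Ioc] at hs
      exact ((hder s (ne_of_gt hs.1)).differentiableAt).differentiableWithinAt
    · intro s hs
      rw [interior_Ioc] at hs
      rw [(hder s (ne_of_gt hs.1)).deriv]
      have h1 : s * G' s - G s ≤ a * s ^ 2 := hineq s hs.1 hs.2.le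
      have hs2 : (0:ℝ) < s ^ 2 := by have := hs.1; positivity
      rw [sub_nonpos, div_le_iff₀ hs2]
      nlinarith
  have hlim : Tendsto φ (nhdsWithin 0 (Ioi 0)) (nhds m) := by
    have h1 : Tendsto (fun s => G s / s) (nhdsWithin 0 (Ioi 0)) (nhds m) := by
      have := (hasDerivAt_iff_tendsto_slope.mp (hG 0))
      rw [hG'0] at this
      have h2 := this.mono_left (nhdsWithin_mono 0 (by intro x hx; exact ne_of_gt hx : Ioi (0:ℝ) ⊆ {0}ᶜ))
      refine h2.congr' ?_
      filter_upwards [self_mem_nhdsWithin] with s hs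
      simp [slope_def_field, hG0, div_eq_inv_mul]
    have h2 : Tendsto (fun s : ℝ => a * s) (nhdsWithin 0 (Ioi 0)) (nhds 0) := by
      have : Tendsto (fun s : ℝ => a * s) (nhds 0) (nhds (a * 0)) := by
        exact (continuous_const.mul continuous_id).tendsto 0
      simpa using this.mono_left nhdsWithin_le_nhds
    simpa using h1.sub h2
  have hev : ∀ᶠ s in nhdsWithin (0:ℝ) (Ioi 0), φ t ≤ φ s := by
    filter_upwards [Ioc_mem_nhdsGT_of_mem (by simp [ht] : (0:ℝ) ∈ Ico 0 t)] with s hs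
    exact hanti hs (right_mem_Ioc.mpr ht) hs.2
  have : φ t ≤ m := ge_of_tendsto hlim hev
  have h3 : G t / t - a * t ≤ m := this
  rw [sub_le_iff_le_add, div_le_iff₀ ht] at h3
  nlinarith


lemma herbst_core (μ : Measure (EuclideanSpace ℝ (Fin d))) [IsProbabilityMeasure μ]
    (CLS : ℝ) (hCLS : 0 < CLS)
    (hLSI : ∀ h : EuclideanSpace ℝ (Fin d) → ℝ,
      ContDiff ℝ 1 h → (∀ x, 0 < h x) →
      Integrable (fun x => h x ^ 2) μ →
      Integrable (fun x => h x ^ 2 * Real.log (h x ^ 2)) μ →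
      Integrable (fun x => ‖gradient h x‖ ^ 2) μ →
      ∫ x, h x ^ 2 * Real.log (h x ^ 2 / ∫ y, h y ^ 2 ∂μ) ∂μ
        ≤ CLS * ∫ x, ‖gradient h x‖ ^ 2 ∂μ)
    (L' M : ℝ) (f : EuclideanSpace ℝ (Fin d) → ℝ) (hf : ContDiff ℝ 1 f)
    (hfb : ∀ x, |f x| ≤ M) (hfd : ∀ x, ‖fderiv ℝ f x‖ ≤ L')
    (t : ℝ) (ht : 0 ≤ t) :
    ∫ x, Real.exp (t * (f x - ∫ y, f y ∂μ)) ∂μ ≤ Real.exp (CLS * L' ^ 2 / 4 * t ^ 2) := by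
  have hM : 0 ≤ M := le_trans (abs_nonneg _) (hfb 0)
  have hL' : 0 ≤ L' := le_trans (norm_nonneg _) (hfd 0)
  have hfc : Continuous f := hf.continuous
  have hfm : ∀ s : ℝ, Continuous fun x : EuclideanSpace ℝ (Fin d) => Real.exp (s * f x) :=
    fun s => Real.continuous_exp.comp (continuous_const.mul hfc)
  -- integrability of basic functions
  have hint : ∀ s : ℝ, Integrable (fun x => Real.exp (s * f x)) μ := by
    intro s
    refine (integrable_const (Real.exp (|s| * M))).mono' ((hfm s).aestronglyMeasurable) ?_
    filter_upwards with x
    rw [Real.norm_eq_abs, abs_of_pos (Real.exp_pos _)]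
    apply Real.exp_le_exp.mpr
    calc s * f x ≤ |s * f x| := le_abs_self _
    _ = |s| * |f x| := abs_mul _ _
    _ ≤ |s| * M := by gcongr; exact hfb x
  have hintf : ∀ s : ℝ, Integrable (fun x => f x * Real.exp (s * f x)) μ := by
    intro s
    refine (integrable_const (M * Real.exp (|s| * M))).mono'
      ((hfc.mul (hfm s)).aestronglyMeasurable) ?_
    filter_upwards with x
    rw [Real.norm_eq_abs, abs_mul, abs_of_pos (Real.exp_pos _)]
    have h1 : Real.exp (s * f x) ≤ Real.exp (|s| * M) := by
      apply Real.exp_le_exp.mpr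
      calc s * f x ≤ |s * f x| := le_abs_self _
      _ = |s| * |f x| := abs_mul _ _
      _ ≤ |s| * M := by gcongr; exact hfb x
    exact mul_le_mul (hfb x) h1 (Real.exp_pos _).le hM
  set F : ℝ → ℝ := fun s => ∫ x, Real.exp (s * f x) ∂μ with hF
  set Fd : ℝ → ℝ := fun s => ∫ x, f x * Real.exp (s * f x) ∂μ with hFd
  -- positivity of F
  have hFpos : ∀ s, 0 < F s := by
    intro s
    have h1 : Real.exp (-(|s| * M)) ≤ F s := by
      have := integral_mono (μ := μ) (integrable_const (Real.exp (-(|s| * M)))) (hint s) ?_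
      · simpa using this
      · intro x
        apply Real.exp_le_exp.mpr
        have : |s * f x| ≤ |s| * M := by
          rw [abs_mul]; gcongr; exact hfb x
        have := abs_le.mp this
        linarith [this.1]
    exact lt_of_lt_of_le (Real.exp_pos _) h1
  -- derivative of F
  have hFderiv : ∀ s : ℝ, HasDerivAt F (Fd s) s := by
    intro s
    have := _root_.hasDerivAt_integral_of_dominated_loc_of_deriv_le (μ := μ)
      (F := fun u x => Real.exp (u * f x)) (F' := fun u x => f x * Real.exp (u * f x))
      (x₀ := s) (bound := fun _ => M * Real.exp ((|s| + 1) * M)) (s := Metric.ball s 1) (Metric.ball_mem_nhds s one_pos)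
      (Eventually.of_forall fun u => (hfm u).aestronglyMeasurable)
      (hint s) ((hfc.mul (hfm s)).aestronglyMeasurable) ?_ (integrable_const _) ?_
    · exact this.2
    · filter_upwards with x
      intro u hu
      rw [Real.norm_eq_abs, abs_mul, abs_of_pos (Real.exp_pos _)]
      have h2 : Real.exp (u * f x) ≤ Real.exp ((|s| + 1) * M) := by
        apply Real.exp_le_exp.mpr
        have hus : |u| ≤ |s| + 1 := by
          have := mem_ball_iff_norm.mp hu
          rw [Real.norm_eq_abs] at this
          calc |u| = |s + (u - s)| := by ring_nf
          _ ≤ |s| + |u - s| := abs_add_le _ _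
          _ ≤ |s| + 1 := by linarith
        calc u * f x ≤ |u * f x| := le_abs_self _
        _ = |u| * |f x| := abs_mul _ _
        _ ≤ (|s| + 1) * M := mul_le_mul hus (hfb x) (abs_nonneg _) (by linarith [abs_nonneg s])
      exact mul_le_mul (hfb x) h2 (Real.exp_pos _).le hM
    · filter_upwards with x
      intro u hu
      have : HasDerivAt (fun u : ℝ => u * f x) (f x) u := by
        simpa using (hasDerivAt_id u).mul_const (f x)
      simpa [mul_comm, Function.comp_def] using (Real.hasDerivAt_exp (u * f x)).comp u this
  set G : ℝ → ℝ := fun s => Real.log (F s) with hG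
  have hGderiv : ∀ s, HasDerivAt G (Fd s / F s) s :=
    fun s => (hFderiv s).log (hFpos s).ne'
  have hF0 : F 0 = 1 := by simp [hF]
  have hG0 : G 0 = 0 := by simp [hG, hF0]
  have hFd0 : Fd 0 = ∫ y, f y ∂μ := by simp [hFd]
  -- the key differential inequality from LSI
  have hkey : ∀ s : ℝ, 0 < s → s * (Fd s / F s) - G s ≤ CLS * L' ^ 2 / 4 * s ^ 2 := by
    intro s hs
    set h : EuclideanSpace ℝ (Fin d) → ℝ := fun x => Real.exp (s * f x / 2) with hh
    have hsq : ∀ x, h x ^ 2 = Real.exp (s * f x) := by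
      intro x
      rw [hh, sq, ← Real.exp_add]
      ring_nf
    have hhc : ContDiff ℝ 1 h :=
      Real.contDiff_exp.comp ((contDiff_const.mul hf).div_const 2)
    -- gradient of h
    have hgrad : ∀ x, ‖gradient h x‖ ^ 2 ≤ s ^ 2 / 4 * L' ^ 2 * Real.exp (s * f x) := by
      intro x
      have hdf : HasFDerivAt f (fderiv ℝ f x) x := (hf.differentiable one_ne_zero x).hasFDerivAt
      have hdu : HasFDerivAt (fun x => s * f x / 2) ((s / 2) • fderiv ℝ f x) x := by
        have heq : (fun y : EuclideanSpace ℝ (Fin d) => s * f y / 2) = fun y => (s / 2) * f y := by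
          funext y; ring
        rw [heq]
        exact hdf.const_mul (s / 2)
      have hexp : HasFDerivAt h ((Real.exp (s * f x / 2)) • ((s / 2) • fderiv ℝ f x)) x :=
        by have := (Real.hasDerivAt_exp (s * f x / 2)).comp_hasFDerivAt x hdu; exact this
      have hng : ‖gradient h x‖ = ‖fderiv ℝ h x‖ := by
        rw [gradient]
        exact LinearIsometryEquiv.norm_map _ _
      rw [hng, hexp.fderiv]
      rw [norm_smul, norm_smul]
      have h1 : ‖Real.exp (s * f x / 2)‖ = Real.exp (s * f x / 2) := by
        rw [Real.norm_eq_abs, abs_of_pos (Real.exp_pos _)]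
      have h2 : ‖(s : ℝ) / 2‖ = s / 2 := by
        rw [Real.norm_eq_abs, abs_of_pos (by linarith)]
      rw [h1, h2]
      have h3 : (Real.exp (s * f x / 2)) ^ 2 = Real.exp (s * f x) := by
        rw [sq, ← Real.exp_add]; ring_nf
      calc (Real.exp (s * f x / 2) * (s / 2 * ‖fderiv ℝ f x‖)) ^ 2
          = Real.exp (s * f x) * ((s/2) ^2 * ‖fderiv ℝ f x‖ ^ 2) := by
            rw [← h3]; ring
        _ ≤ Real.exp (s * f x) * ((s/2) ^2 * L' ^ 2) := by
            have h4 : ‖fderiv ℝ f x‖ ^ 2 ≤ L' ^ 2 := by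
              nlinarith [norm_nonneg (fderiv ℝ f x), hfd x]
            have h5 := mul_le_mul_of_nonneg_left h4 (sq_nonneg (s/2))
            exact mul_le_mul_of_nonneg_left h5 (Real.exp_pos _).le
        _ = s ^ 2 / 4 * L' ^ 2 * Real.exp (s * f x) := by ring
    have hgradcont : Continuous fun x => ‖gradient h x‖ ^ 2 := by
      have h1 : Continuous fun x => fderiv ℝ h x := hhc.continuous_fderiv one_ne_zero
      have h2 : Continuous fun x => gradient h x := by
        simp only [gradient]
        exact (LinearIsometryEquiv.continuous _).comp h1
      exact (h2.norm).pow 2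
    have hint2 : Integrable (fun x => h x ^ 2) μ := by
      simp only [hsq]; exact hint s
    have hint3 : Integrable (fun x => h x ^ 2 * Real.log (h x ^ 2)) μ := by
      have : (fun x => h x ^ 2 * Real.log (h x ^ 2)) =
          fun x => s * (f x * Real.exp (s * f x)) := by
        ext x
        rw [hsq x, Real.log_exp]
        ring
      rw [this]
      exact (hintf s).const_mul s
    have hint4 : Integrable (fun x => ‖gradient h x‖ ^ 2) μ := by
      refine (integrable_const (s ^ 2 / 4 * L' ^ 2 * Real.exp (|s| * M))).mono'
        hgradcont.aestronglyMeasurable ?_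
      filter_upwards with x
      rw [Real.norm_eq_abs, abs_of_nonneg (sq_nonneg _)]
      refine le_trans (hgrad x) ?_
      have h6 : Real.exp (s * f x) ≤ Real.exp (|s| * M) := by
        apply Real.exp_le_exp.mpr
        calc s * f x ≤ |s * f x| := le_abs_self _
        _ = |s| * |f x| := abs_mul _ _
        _ ≤ |s| * M := by gcongr; exact hfb x
      exact mul_le_mul_of_nonneg_left h6 (by positivity)
    have hLSIa := hLSI h hhc (fun x => Real.exp_pos _) hint2 hint3 hint4
    -- compute LHS of LSI
    have hLHS : ∫ x, h x ^ 2 * Real.log (h x ^ 2 / ∫ y, h y ^ 2 ∂μ) ∂μ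
        = s * Fd s - G s * F s := by
      have hFh : (∫ y, h y ^ 2 ∂μ) = F s := by
        simp only [hsq]; rfl
      have : (fun x => h x ^ 2 * Real.log (h x ^ 2 / ∫ y, h y ^ 2 ∂μ)) =
          fun x => s * (f x * Real.exp (s * f x)) - G s * Real.exp (s * f x) := by
        ext x
        rw [hsq x, hFh, Real.log_div (Real.exp_pos _).ne' (hFpos s).ne', Real.log_exp]
        ring
      rw [this, integral_sub ((hintf s).const_mul s) ((hint s).const_mul (G s)),
        MeasureTheory.integral_const_mul, MeasureTheory.integral_const_mul]
    -- bound RHS of LSI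
    have hRHS : ∫ x, ‖gradient h x‖ ^ 2 ∂μ ≤ s ^ 2 / 4 * L' ^ 2 * F s := by
      have := integral_mono hint4 ((hint s).const_mul (s ^ 2 / 4 * L' ^ 2)) hgrad
      rwa [MeasureTheory.integral_const_mul] at this
    have hcomb : s * Fd s - G s * F s ≤ CLS * (s ^ 2 / 4 * L' ^ 2 * F s) := by
      rw [← hLHS]
      refine le_trans hLSIa ?_
      gcongr
    have hFp := hFpos s
    rw [sub_le_iff_le_add]
    have heq2 : s * (Fd s / F s) = s * Fd s / F s := by ring
    rw [heq2, div_le_iff₀ hFp]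
    nlinarith [hcomb, hFp]
  -- apply ODE lemma
  rcases eq_or_lt_of_le ht with rfl | htpos
  · simp [hF0]
  · have hode := herbst_ode (G := G) (G' := fun s => Fd s / F s)
      (m := ∫ y, f y ∂μ) (a := CLS * L' ^ 2 / 4) htpos hGderiv hG0
      (by show Fd 0 / F 0 = _; rw [hFd0, hF0, div_one]) (fun s hs _ => hkey s hs)
    -- conclude
    have hsplit : (fun x => Real.exp (t * (f x - ∫ y, f y ∂μ))) =
        fun x => Real.exp (-(t * ∫ y, f y ∂μ)) * Real.exp (t * f x) := by
      ext x
      rw [← Real.exp_add]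
      ring_nf
    rw [hsplit, MeasureTheory.integral_const_mul]
    have hFt : F t ≤ Real.exp ((∫ y, f y ∂μ) * t + CLS * L' ^ 2 / 4 * t ^ 2) := by
      have := Real.exp_le_exp.mpr hode
      rwa [Real.exp_log (hFpos t)] at this
    calc Real.exp (-(t * ∫ y, f y ∂μ)) * F t
        ≤ Real.exp (-(t * ∫ y, f y ∂μ)) *
          Real.exp ((∫ y, f y ∂μ) * t + CLS * L' ^ 2 / 4 * t ^ 2) := by
          gcongr
      _ = Real.exp (CLS * L' ^ 2 / 4 * t ^ 2) := by
          rw [← Real.exp_add]; ring_nf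


-- all-t version of the core lemma
lemma herbst_core_all {d : ℕ} (μ : Measure (EuclideanSpace ℝ (Fin d))) [IsProbabilityMeasure μ]
    (CLS : ℝ) (hCLS : 0 < CLS)
    (hLSI : ∀ h : EuclideanSpace ℝ (Fin d) → ℝ,
      ContDiff ℝ 1 h → (∀ x, 0 < h x) →
      Integrable (fun x => h x ^ 2) μ →
      Integrable (fun x => h x ^ 2 * Real.log (h x ^ 2)) μ →
      Integrable (fun x => ‖gradient h x‖ ^ 2) μ →
      ∫ x, h x ^ 2 * Real.log (h x ^ 2 / ∫ y, h y ^ 2 ∂μ) ∂μ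
        ≤ CLS * ∫ x, ‖gradient h x‖ ^ 2 ∂μ)
    (L' M : ℝ) (f : EuclideanSpace ℝ (Fin d) → ℝ) (hf : ContDiff ℝ 1 f)
    (hfb : ∀ x, |f x| ≤ M) (hfd : ∀ x, ‖fderiv ℝ f x‖ ≤ L')
    (t : ℝ) :
    ∫ x, Real.exp (t * (f x - ∫ y, f y ∂μ)) ∂μ ≤ Real.exp (CLS * L' ^ 2 / 4 * t ^ 2) := by
  rcases le_or_gt 0 t with ht | ht
  · exact herbst_core μ CLS hCLS hLSI L' M f hf hfb hfd t ht
  · have hneg := herbst_core μ CLS hCLS hLSI L' M (fun x => -f x) hf.neg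
      (fun x => by rw [abs_neg]; exact hfb x)
      (fun x => by rw [fderiv_fun_neg, norm_neg]; exact hfd x) (-t) (by linarith)
    have h1 : (∫ y, -f y ∂μ) = -∫ y, f y ∂μ := integral_neg f
    rw [h1] at hneg
    have h2 : (fun x => Real.exp (-t * (-f x - -∫ y, f y ∂μ))) =
        fun x => Real.exp (t * (f x - ∫ y, f y ∂μ)) := by
      funext x; ring_nf
    rw [h2] at hneg
    convert hneg using 2
    ring

-- the smooth truncation functions
lemma exists_truncation (n : ℕ) :
    ∃ T : ℝ → ℝ, ContDiff ℝ 1 T ∧ (∀ s, |s| ≤ (n:ℝ) + 1 → T s = s) ∧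
      (∀ a b, |T a - T b| ≤ |a - b|) ∧ (∀ s, |T s| ≤ (n:ℝ) + 2) ∧ T 0 = 0 := by
  have h01 : (0:ℝ) < (n:ℝ) + 1 := by positivity
  have h12 : ((n:ℝ) + 1) < (n:ℝ) + 2 := by linarith
  set ψ : ContDiffBump (0:ℝ) := ⟨(n:ℝ) + 1, (n:ℝ) + 2, h01, h12⟩ with hψ
  have hψc : Continuous ψ := ψ.continuous
  have hrIn : ψ.rIn = (n:ℝ) + 1 := rfl
  have hrOut : ψ.rOut = (n:ℝ) + 2 := rfl
  set T : ℝ → ℝ := fun s => ∫ v in (0:ℝ)..s, ψ v with hT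
  have hder : ∀ s, HasDerivAt T (ψ s) s := by
    intro s
    exact integral_hasDerivAt_right (hψc.intervalIntegrable 0 s)
      (hψc.stronglyMeasurableAtFilter _ _) hψc.continuousAt
  have hlip : ∀ a b, |T a - T b| ≤ |a - b| := by
    intro a b
    have h1 : T a - T b = ∫ v in b..a, ψ v :=
      integral_interval_sub_left (hψc.intervalIntegrable 0 a) (hψc.intervalIntegrable 0 b)
    rw [h1]
    have := intervalIntegral.norm_integral_le_of_norm_le_const (C := 1) (f := fun v => ψ v)
      (a := b) (b := a) ?_
    · rw [Real.norm_eq_abs] at this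
      simpa [abs_sub_comm] using this
    · intro v _
      rw [Real.norm_eq_abs, abs_of_nonneg (ψ.nonneg)]
      exact ψ.le_one
  have hT0 : T 0 = 0 := by simp [hT]
  have hid : ∀ s, |s| ≤ (n:ℝ) + 1 → T s = s := by
    intro s hs
    have : T s = ∫ v in (0:ℝ)..s, (1:ℝ) := by
      apply integral_congr
      intro v hv
      apply ψ.one_of_mem_closedBall
      rw [Metric.mem_closedBall, Real.dist_eq, sub_zero, hrIn]
      rcases mem_uIcc.mp hv with ⟨h1, h2⟩ | ⟨h1, h2⟩
      · rw [abs_le]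
        constructor
        · have := neg_abs_le s; linarith
        · have := le_abs_self s; linarith
      · rw [abs_le]
        constructor
        · have := neg_abs_le s; linarith
        · have := le_abs_self s; linarith
    rw [this, integral_one, sub_zero]
  have hbound : ∀ s, |T s| ≤ (n:ℝ) + 2 := by
    intro s
    rcases le_or_gt |s| ((n:ℝ) + 2) with hs | hs
    · calc |T s| = |T s - T 0| := by rw [hT0, sub_zero]
      _ ≤ |s - 0| := hlip s 0
      _ = |s| := by rw [sub_zero]
      _ ≤ (n:ℝ) + 2 := hs
    · set c : ℝ := if 0 ≤ s then (n:ℝ) + 2 else -((n:ℝ) + 2) with hc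
      have hcabs : |c| = (n:ℝ) + 2 := by
        rcases le_or_gt 0 s with h | h
        · rw [hc, if_pos h, abs_of_nonneg (by positivity)]
        · rw [hc, if_neg (not_le.mpr h), abs_neg, abs_of_nonneg (by positivity)]
      have hzero : ∫ v in c..s, ψ v = 0 := by
        have : EqOn (fun v => (ψ : ℝ → ℝ) v) (fun _ => (0:ℝ)) (uIcc c s) := by
          intro v hv
          apply ψ.zero_of_le_dist
          rw [Real.dist_eq, sub_zero]
          show (n:ℝ) + 2 ≤ |v|
          rcases le_or_gt 0 s with h | h
          · have hcs : c = (n:ℝ) + 2 := by simp [hc, h]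
            rcases mem_uIcc.mp hv with ⟨h1, h2⟩ | ⟨h1, h2⟩
            · rw [hcs] at h1; rw [abs_of_nonneg (by linarith)]; linarith
            · rw [hcs] at h2
              have hsle : |s| = s := abs_of_nonneg h
              rw [hsle] at hs
              linarith
          · have hcs : c = -((n:ℝ) + 2) := by simp [hc, not_le.mpr h]
            have hsle : |s| = -s := abs_of_neg h
            rw [hsle] at hs
            rcases mem_uIcc.mp hv with ⟨h1, h2⟩ | ⟨h1, h2⟩
            · rw [hcs] at h1
              rw [abs_of_nonpos (by linarith)]; linarith
            · rw [hcs] at h2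
              rw [abs_of_nonpos (by linarith)]; linarith
        calc ∫ v in c..s, ψ v = ∫ v in c..s, (0:ℝ) := integral_congr this
        _ = 0 := by simp
      have hsplit : T s = T c + ∫ v in c..s, ψ v := by
        rw [hT]
        exact (integral_add_adjacent_intervals (hψc.intervalIntegrable 0 c)
          (hψc.intervalIntegrable c s)).symm
      rw [hsplit, hzero, add_zero]
      calc |T c| = |T c - T 0| := by rw [hT0, sub_zero]
      _ ≤ |c - 0| := hlip c 0
      _ = (n:ℝ) + 2 := by rw [sub_zero, hcabs]
  refine ⟨T, ?_, hid, hlip, hbound, hT0⟩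
  rw [contDiff_one_iff_deriv]
  constructor
  · exact fun s => (hder s).differentiableAt
  · have : deriv T = fun s => ψ s := funext fun s => (hder s).deriv
    rw [this]
    exact hψc

-- mollification of a Lipschitz function
lemma exists_mollified {d : ℕ} (L : ℝ) (hL : 0 ≤ L) (g : EuclideanSpace ℝ (Fin d) → ℝ)
    (hg : ∀ x y, |g x - g y| ≤ L * ‖x - y‖) (ε : ℝ) (hε : 0 < ε) :
    ∃ f : EuclideanSpace ℝ (Fin d) → ℝ, ContDiff ℝ 1 f ∧
      (∀ x, |f x - g x| ≤ L * ε) ∧ (∀ x y, |f x - f y| ≤ L * ‖x - y‖) := by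
  have hgc : Continuous g := by
    rcases eq_or_lt_of_le hL with rfl | hLpos
    · have : ∀ x y, g x = g y := by
        intro x y
        have := hg x y
        simp only [zero_mul] at this
        have := abs_nonpos_iff.mp (le_trans this le_rfl)
        linarith [sub_eq_zero.mp this]
      exact continuous_const.congr fun x => (this 0 x)
    · have : LipschitzWith ⟨L, hL⟩ g := by
        refine LipschitzWith.of_dist_le_mul ?_
        intro x y
        rw [Real.dist_eq, dist_eq_norm]
        exact hg x y
      exact this.continuous
  set φ : ContDiffBump (0 : EuclideanSpace ℝ (Fin d)) := ⟨ε/2, ε, by positivity, by linarith⟩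
  set ν : Measure (EuclideanSpace ℝ (Fin d)) := volume with hν
  set f : EuclideanSpace ℝ (Fin d) → ℝ :=
    (φ.normed ν) ⋆[ContinuousLinearMap.lsmul ℝ ℝ, ν] g with hf
  have hexist : ConvolutionExists (φ.normed ν) g (ContinuousLinearMap.lsmul ℝ ℝ) ν :=
    HasCompactSupport.convolutionExists_left_of_continuous_right _
      φ.hasCompactSupport_normed (φ.integrable_normed.locallyIntegrable) hgc
  refine ⟨f, ?_, ?_, ?_⟩
  · exact HasCompactSupport.contDiff_convolution_left _ φ.hasCompactSupport_normed
      (φ.contDiff_normed (n := 1)) (hgc.locallyIntegrable)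
  · intro x
    have := ContDiffBump.dist_normed_convolution_le (φ := φ) (μ := ν) (g := g) (x₀ := x) (ε := L * ε)
      hgc.aestronglyMeasurable ?_
    · rw [Real.dist_eq] at this
      exact this
    · intro y hy
      rw [Real.dist_eq]
      refine le_trans (hg y x) ?_
      have : ‖y - x‖ < ε := by
        rw [← dist_eq_norm]
        exact hy
      calc L * ‖y - x‖ ≤ L * ε := by gcongr
      _ = L * ε := rfl
  · intro x y
    have hx := hexist x
    have hy := hexist y
    rw [hf]
    rw [convolution_def, convolution_def]
    rw [← integral_sub hx.integrable hy.integrable]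
    have hb : Integrable (fun t => φ.normed ν t * (L * ‖x - y‖)) ν :=
      φ.integrable_normed.mul_const _
    rw [← Real.norm_eq_abs]
    refine le_trans (norm_integral_le_of_norm_le hb ?_) ?_
    swap
    · rw [MeasureTheory.integral_mul_const, φ.integral_normed, one_mul]
    · filter_upwards with t
      simp only [ContinuousLinearMap.lsmul_apply, smul_eq_mul]
      rw [← mul_sub, Real.norm_eq_abs, abs_mul, abs_of_nonneg (φ.nonneg_normed t)]
      apply mul_le_mul_of_nonneg_left _ (φ.nonneg_normed t)
      have := hg (x - t) (y - t)
      have heq : x - t - (y - t) = x - y := by abel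
      rwa [heq] at this

/-- Herbst argument: a logarithmic Sobolev inequality implies a sub-Gaussian bound on
the moment generating function of any Lipschitz observable. -/
theorem stmt9 {d : ℕ} (μ : Measure (EuclideanSpace ℝ (Fin d))) [IsProbabilityMeasure μ]
    (CLS : ℝ) (hCLS : 0 < CLS)
    (hLSI : ∀ h : EuclideanSpace ℝ (Fin d) → ℝ,
      ContDiff ℝ 1 h → (∀ x, 0 < h x) →
      Integrable (fun x => h x ^ 2) μ →
      Integrable (fun x => h x ^ 2 * Real.log (h x ^ 2)) μ →
      Integrable (fun x => ‖gradient h x‖ ^ 2) μ →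
      ∫ x, h x ^ 2 * Real.log (h x ^ 2 / ∫ y, h y ^ 2 ∂μ) ∂μ
        ≤ CLS * ∫ x, ‖gradient h x‖ ^ 2 ∂μ)
    (L : ℝ) (g : EuclideanSpace ℝ (Fin d) → ℝ)
    (hg : ∀ x y, |g x - g y| ≤ L * ‖x - y‖)
    (hgint : Integrable g μ)
    (lam : ℝ) :
    ∫⁻ x, ENNReal.ofReal (Real.exp (lam * (g x - ∫ y, g y ∂μ))) ∂μ
      ≤ ENNReal.ofReal (Real.exp (CLS * L ^ 2 / 4 * lam ^ 2)) := by
  by_cases hL : 0 ≤ L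
  · -- main case
    choose gn hgn1 hgn2 hgn3 using
      fun n : ℕ => exists_mollified L hL g hg (1 / ((n:ℝ) + 1)) (by positivity)
    choose T hT1 hT2 hT3 hT4 hT5 using exists_truncation
    set f : ℕ → EuclideanSpace ℝ (Fin d) → ℝ := fun n x => T n (gn n x) with hfdef
    have hfC : ∀ n, ContDiff ℝ 1 (f n) := fun n => (hT1 n).comp (hgn1 n)
    have hfb : ∀ n x, |f n x| ≤ (n:ℝ) + 2 := fun n x => hT4 n _
    have hflip : ∀ n x y, |f n x - f n y| ≤ L * ‖x - y‖ :=
      fun n x y => le_trans (hT3 n _ _) (hgn3 n x y)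
    have hfLip : ∀ n, LipschitzWith ⟨L, hL⟩ (f n) := by
      intro n
      refine LipschitzWith.of_dist_le_mul ?_
      intro x y
      rw [Real.dist_eq, dist_eq_norm]
      exact hflip n x y
    have hfd : ∀ n x, ‖fderiv ℝ (f n) x‖ ≤ L :=
      fun n x => norm_fderiv_le_of_lipschitz ℝ (hfLip n)
    have hfabs : ∀ n x, |f n x| ≤ |g x| + L := by
      intro n x
      have h1 : |f n x| ≤ |gn n x| := by
        calc |f n x| = |T n (gn n x) - T n 0| := by rw [hT5 n, sub_zero]
        _ ≤ |gn n x - 0| := hT3 n _ _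
        _ = |gn n x| := by rw [sub_zero]
      have h2 : |gn n x - g x| ≤ L * (1 / ((n:ℝ) + 1)) := hgn2 n x
      have h3 : L * (1 / ((n:ℝ) + 1)) ≤ L := by
        rw [mul_one_div]
        apply div_le_self hL
        simp
      calc |f n x| ≤ |gn n x| := h1
      _ ≤ |g x| + |gn n x - g x| := by
          have := abs_add_le (g x) (gn n x - g x)
          simpa using this
      _ ≤ |g x| + L := by linarith
    have hptw : ∀ x, Tendsto (fun n => f n x) atTop (nhds (g x)) := by
      intro x
      have hgnlim : Tendsto (fun n => gn n x) atTop (nhds (g x)) := by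
        rw [tendsto_iff_dist_tendsto_zero]
        have h1 : Tendsto (fun n : ℕ => L * (1 / ((n:ℝ) + 1))) atTop (nhds (L * 0)) :=
          Tendsto.const_mul L tendsto_one_div_add_atTop_nhds_zero_nat
        rw [mul_zero] at h1
        exact squeeze_zero (g := fun n : ℕ => L * (1 / ((n:ℝ) + 1))) (fun n => dist_nonneg)
          (fun n => by rw [Real.dist_eq]; exact hgn2 n x) h1
      have hev : ∀ᶠ n in atTop, f n x = gn n x := by
        filter_upwards [eventually_ge_atTop ⌈|g x| + L⌉₊] with n hn
        apply hT2 n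
        have h1 : |gn n x| ≤ |g x| + L := by
          have h2 : |gn n x - g x| ≤ L * (1 / ((n:ℝ) + 1)) := hgn2 n x
          have h3 : L * (1 / ((n:ℝ) + 1)) ≤ L := by
            rw [mul_one_div]; apply div_le_self hL; simp
          calc |gn n x| ≤ |g x| + |gn n x - g x| := by
                have := abs_add_le (g x) (gn n x - g x); simpa using this
          _ ≤ |g x| + L := by linarith
        have h4 : |g x| + L ≤ (n:ℝ) := le_trans (Nat.le_ceil _) (by exact_mod_cast hn)
        linarith
      exact hgnlim.congr' (hev.mono fun n h => h.symm)
    have hmean : Tendsto (fun n => ∫ y, f n y ∂μ) atTop (nhds (∫ y, g y ∂μ)) := by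
      apply tendsto_integral_of_dominated_convergence (fun x => |g x| + L)
        (fun n => ((hfC n).continuous).aestronglyMeasurable)
        (hgint.abs.add (integrable_const L))
        (fun n => Eventually.of_forall fun x => by
          rw [Real.norm_eq_abs]; exact hfabs n x)
        (Eventually.of_forall hptw)
    have hbound : ∀ n, ∫ x, Real.exp (lam * (f n x - ∫ y, f n y ∂μ)) ∂μ
        ≤ Real.exp (CLS * L ^ 2 / 4 * lam ^ 2) :=
      fun n => herbst_core_all μ CLS hCLS hLSI L ((n:ℝ) + 2) (f n) (hfC n)
        (hfb n) (hfd n) lam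
    have hintexp : ∀ n, Integrable
        (fun x => Real.exp (lam * (f n x - ∫ y, f n y ∂μ))) μ := by
      intro n
      refine (integrable_const (Real.exp (|lam| * (((n:ℝ) + 2) + |∫ y, f n y ∂μ|)))).mono'
        ((Real.continuous_exp.comp
          (continuous_const.mul (((hfC n).continuous).sub continuous_const))).aestronglyMeasurable) ?_
      filter_upwards with x
      rw [Real.norm_eq_abs, abs_of_pos (Real.exp_pos _)]
      apply Real.exp_le_exp.mpr
      calc lam * (f n x - ∫ y, f n y ∂μ) ≤ |lam * (f n x - ∫ y, f n y ∂μ)| := le_abs_self _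
      _ = |lam| * |f n x - ∫ y, f n y ∂μ| := abs_mul _ _
      _ ≤ |lam| * (((n:ℝ) + 2) + |∫ y, f n y ∂μ|) := by
          gcongr
          calc |f n x - ∫ y, f n y ∂μ| ≤ |f n x| + |∫ y, f n y ∂μ| := abs_sub _ _
          _ ≤ ((n:ℝ) + 2) + |∫ y, f n y ∂μ| := by
              have := hfb n x; linarith
    have hlin : ∀ n, ∫⁻ x, ENNReal.ofReal (Real.exp (lam * (f n x - ∫ y, f n y ∂μ))) ∂μ
        ≤ ENNReal.ofReal (Real.exp (CLS * L ^ 2 / 4 * lam ^ 2)) := by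
      intro n
      rw [← ofReal_integral_eq_lintegral_ofReal (hintexp n)
        (Eventually.of_forall fun x => (Real.exp_pos _).le)]
      exact ENNReal.ofReal_le_ofReal (hbound n)
    have hptw2 : ∀ x, Tendsto
        (fun n => ENNReal.ofReal (Real.exp (lam * (f n x - ∫ y, f n y ∂μ)))) atTop
        (nhds (ENNReal.ofReal (Real.exp (lam * (g x - ∫ y, g y ∂μ))))) := by
      intro x
      apply (ENNReal.continuous_ofReal.tendsto _).comp
      apply (Real.continuous_exp.tendsto _).comp
      exact ((hptw x).sub hmean).const_mul lam
    calc ∫⁻ x, ENNReal.ofReal (Real.exp (lam * (g x - ∫ y, g y ∂μ))) ∂μ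
        = ∫⁻ x, liminf
            (fun n => ENNReal.ofReal (Real.exp (lam * (f n x - ∫ y, f n y ∂μ)))) atTop ∂μ := by
          apply lintegral_congr
          intro x
          exact ((hptw2 x).liminf_eq).symm
      _ ≤ liminf (fun n => ∫⁻ x, ENNReal.ofReal
            (Real.exp (lam * (f n x - ∫ y, f n y ∂μ))) ∂μ) atTop := by
          apply lintegral_liminf_le
          intro n
          exact (Real.continuous_exp.comp (continuous_const.mul
            (((hfC n).continuous).sub continuous_const))).measurable.ennreal_ofReal
      _ ≤ ENNReal.ofReal (Real.exp (CLS * L ^ 2 / 4 * lam ^ 2)) := by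
          refine le_trans (liminf_le_liminf (Eventually.of_forall hlin)) ?_
          simp
  · -- degenerate case: L < 0 forces the space to be a single point
    push_neg at hL
    have hsub : ∀ x y : EuclideanSpace ℝ (Fin d), x = y := by
      intro x y
      by_contra hne
      have h1 : 0 < ‖x - y‖ := by
        rw [norm_pos_iff, sub_ne_zero]
        exact hne
      have h2 := hg x y
      nlinarith [abs_nonneg (g x - g y)]
    have hm : ∫ y, g y ∂μ = g 0 := by
      have : g = fun _ => g 0 := funext fun x => by rw [hsub x 0]
      rw [this]
      simp
    have heq : (fun x => ENNReal.ofReal (Real.exp (lam * (g x - ∫ y, g y ∂μ)))) =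
        fun _ => (1 : ℝ≥0∞) := by
      funext x
      have hx0 : x = 0 := hsub x 0
      rw [hm, hx0]
      simp
    rw [heq]
    rw [lintegral_one, measure_univ]
    rw [ENNReal.one_le_ofReal]
    apply Real.one_le_exp
    positivity
end
end

section
/- Let α, K, A > 0 and β ∈ (0,1]. There exists a constant C > 0 depending only on (α, β, K, A) and not on the dimension d such that the following holds: for every d ≥ 1 and every probability density p* on ℝ^d of the form p*(x) = Z^{−1} exp( −u(x) + a(x) ), where u : ℝ^d → ℝ is C² with ⟨h, ∇²u(x) h⟩ ≥ α‖h‖² for all x, h, a is β-Hölder with constant K, Z is the normalizing constant, and the minimizer y₀ of u (i.e. ∇u(y₀) = 0) satisfies ‖y₀‖ ≤ A√d, one has ∫_{ℝ^d} ‖x‖² p*(x) dx ≤ C d. -/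
open MeasureTheory Set
open scoped ENNReal

set_option maxHeartbeats 1000000

noncomputable section

section Helpers
variable {d : ℕ}



lemma aux_convex {u : EuclideanSpace ℝ (Fin d) → ℝ} {α : ℝ}
    (hu : ContDiff ℝ 2 u)
    (hess : ∀ y h, α * ‖h‖ ^ 2 ≤ iteratedFDeriv ℝ 2 u y ![h, h])
    {y₀ : EuclideanSpace ℝ (Fin d)} (hgrad : fderiv ℝ u y₀ = 0)
    (v : EuclideanSpace ℝ (Fin d)) {l : ℝ} (hl0 : 0 ≤ l) (hl1 : l ≤ 1) :
    u (y₀ + l • v) + α / 2 * (1 - l ^ 2) * ‖v‖ ^ 2 ≤ u (y₀ + v) := by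
  set L : (ℝ) → EuclideanSpace ℝ (Fin d) := fun s => y₀ + s • v with hLdef
  have hL : ∀ s : ℝ, HasDerivAt L v s := by
    intro s
    have h1 : HasDerivAt (fun s : ℝ => s • v) ((1:ℝ) • v) s :=
      (hasDerivAt_id s).smul_const v
    show HasDerivAt (fun s => y₀ + s • v) v s
    simpa [one_smul] using h1.const_add y₀
  have hudiff : Differentiable ℝ u := hu.differentiable (by norm_num)
  set g1 : ℝ → ℝ := fun s => fderiv ℝ u (L s) v with hg1def
  have hg1 : ∀ s : ℝ, HasDerivAt (fun s => u (L s)) (g1 s) s := fun s =>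
    (hudiff (L s)).hasFDerivAt.comp_hasDerivAt s (hL s)
  have hF : ContDiff ℝ 1 (fderiv ℝ u) := hu.fderiv_right (by norm_num)
  have hFdiff : Differentiable ℝ (fderiv ℝ u) := hF.differentiable one_ne_zero
  have hg2 : ∀ s : ℝ, HasDerivAt g1 (iteratedFDeriv ℝ 2 u (L s) ![v, v]) s := by
    intro s
    have h1 : HasFDerivAt (fderiv ℝ u) (fderiv ℝ (fderiv ℝ u) (L s)) (L s) :=
      (hFdiff (L s)).hasFDerivAt
    have h2 : HasFDerivAt (fun w => fderiv ℝ u w v)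
        ((ContinuousLinearMap.apply ℝ ℝ v).comp (fderiv ℝ (fderiv ℝ u) (L s))) (L s) :=
      (ContinuousLinearMap.apply ℝ ℝ v).hasFDerivAt.comp (L s) h1
    have h3 := h2.comp_hasDerivAt s (hL s)
    have h4 : iteratedFDeriv ℝ 2 u (L s) ![v, v] = fderiv ℝ (fderiv ℝ u) (L s) v v := by
      rw [iteratedFDeriv_two_apply]; simp
    rw [h4]
    exact h3
  have hlin : ∀ t : ℝ, HasDerivAt (fun s : ℝ => α * ‖v‖ ^ 2 * s) (α * ‖v‖ ^ 2) t := by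
    intro t
    simpa using (hasDerivAt_id t).const_mul (α * ‖v‖ ^ 2)
  have hg10 : g1 0 = 0 := by
    simp only [hg1def, hLdef, zero_smul, add_zero, hgrad]
    simp
  have step1 : ∀ s : ℝ, 0 ≤ s → α * ‖v‖ ^ 2 * s ≤ g1 s := by
    intro s hs
    have hmono : Monotone (fun s => g1 s - α * ‖v‖ ^ 2 * s) := by
      apply monotone_of_deriv_nonneg
      · intro t
        exact ((hg2 t).sub (hlin t)).differentiableAt
      · intro t
        rw [show deriv (fun s => g1 s - α * ‖v‖ ^ 2 * s) t = _ from ((hg2 t).sub (hlin t)).deriv]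
        have := hess (L t) v
        linarith
    have h5 := hmono hs
    simp only [hg10] at h5
    linarith [h5]
  have hquad : ∀ s : ℝ, HasDerivAt (fun s : ℝ => α * ‖v‖ ^ 2 / 2 * s ^ 2) (α * ‖v‖ ^ 2 * s) s := by
    intro s
    have h := (hasDerivAt_pow 2 s).const_mul (α * ‖v‖ ^ 2 / 2)
    refine h.congr_deriv ?_
    push_cast
    ring
  have step2 : MonotoneOn (fun s : ℝ => u (L s) - α * ‖v‖ ^ 2 / 2 * s ^ 2) (Ici (0:ℝ)) := by
    apply monotoneOn_of_deriv_nonneg (convex_Ici 0)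
    · apply Continuous.continuousOn
      have hLc : Continuous L := by
        apply Continuous.add continuous_const
        exact continuous_id.smul continuous_const
      exact (hu.continuous.comp hLc).sub (by continuity)
    · intro s hs
      exact ((hg1 s).sub (hquad s)).differentiableAt.differentiableWithinAt
    · intro s hs
      rw [interior_Ici] at hs
      rw [show deriv (fun s => u (L s) - α * ‖v‖ ^ 2 / 2 * s ^ 2) s = _ from ((hg1 s).sub (hquad s)).deriv]
      have h1 := step1 s (le_of_lt hs)
      linarith
  have hfin := step2 (mem_Ici.mpr hl0) (mem_Ici.mpr (by norm_num : (0:ℝ) ≤ 1)) hl1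
  simp only [hLdef, one_smul] at hfin
  nlinarith [hfin]

lemma aux_scale {d : ℕ} (g : EuclideanSpace ℝ (Fin d) → ℝ≥0∞) (hg : Measurable g)
    {l : ℝ} (hl : l ≠ 0) (c : EuclideanSpace ℝ (Fin d)) :
    ∫⁻ x, g (c + l • x) = ENNReal.ofReal |(l ^ d)⁻¹| * ∫⁻ x, g x := by
  rw [← lintegral_map (hg.comp' (measurable_const_add c)) (measurable_const_smul l)]
  rw [show (fun y : EuclideanSpace ℝ (Fin d) => l • y) = (l • ·) from rfl]
  rw [Measure.map_addHaar_smul volume hl]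
  rw [lintegral_smul_measure]
  have h2 : ∫⁻ (a : EuclideanSpace ℝ (Fin d)), g (c + a) = ∫⁻ x, g x :=
    lintegral_add_left_eq_self (fun y => g y) c
  rw [h2, finrank_euclideanSpace_fin, smul_eq_mul]

lemma aux_cont_a {d : ℕ} {a : EuclideanSpace ℝ (Fin d) → ℝ} {K β : ℝ} (hβ0 : 0 < β)
    (ha : ∀ x y, |a x - a y| ≤ K * ‖x - y‖ ^ β) : Continuous a := by
  rw [continuous_iff_continuousAt]
  intro b
  rw [ContinuousAt, tendsto_iff_dist_tendsto_zero]
  have hb : Filter.Tendsto (fun x => K * ‖x - b‖ ^ β) (nhds b) (nhds 0) := by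
    have h1 : Filter.Tendsto (fun x : EuclideanSpace ℝ (Fin d) => ‖x - b‖) (nhds b) (nhds 0) := by
      have := (continuous_id.sub (continuous_const (y := b))).norm.tendsto b
      simpa using this
    have h2 : Filter.Tendsto (fun t : ℝ => K * t ^ β) (nhds 0) (nhds 0) := by
      have h3 : ContinuousAt (fun t : ℝ => t ^ β) 0 :=
        Real.continuousAt_rpow_const 0 β (Or.inr (le_of_lt hβ0))
      have h4 := h3.tendsto.const_mul K
      simp only [Real.zero_rpow (ne_of_gt hβ0), mul_zero] at h4
      exact h4
    exact h2.comp h1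
  apply squeeze_zero (fun x => dist_nonneg) _ hb
  intro x
  rw [Real.dist_eq]
  exact ha x b

lemma aux_gauss_int {d : ℕ} {b : ℝ} (hb : 0 < b) (w : EuclideanSpace ℝ (Fin d)) :
    Integrable (fun x : EuclideanSpace ℝ (Fin d) => Real.exp (-b * ‖x - w‖ ^ 2)) := by
  have h0 : Integrable (fun x : EuclideanSpace ℝ (Fin d) => Real.exp (-b * ‖x‖ ^ 2)) := by
    have h1 := (GaussianFourier.integrable_cexp_neg_mul_sq_norm_add (V := EuclideanSpace ℝ (Fin d))
      (b := (b : ℂ)) (by simpa using hb) 0 0).norm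
    convert h1 using 2 with x
    rw [Complex.norm_exp]
    congr 1
    have : (-(b:ℂ) * (‖x‖:ℂ) ^ 2 + 0 * ((inner ℝ (0 : EuclideanSpace ℝ (Fin d)) x : ℝ) : ℂ)).re
        = -b * ‖x‖ ^ 2 := by
      simp [Complex.add_re, Complex.mul_re]
      left
      norm_cast
    rw [this]
  exact h0.comp_sub_right w


lemma aux_rpow_le {β s : ℝ} (hβ0 : 0 < β) (hβ1 : β ≤ 1) (hs : 0 ≤ s) : s ^ β ≤ 1 + s := by
  rcases le_or_gt s 1 with h | h
  · have := Real.rpow_le_one hs h (le_of_lt hβ0)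
    linarith
  · have h2 : s ^ β ≤ s ^ (1:ℝ) :=
      Real.rpow_le_rpow_of_exponent_le (le_of_lt h) hβ1
    rw [Real.rpow_one] at h2
    linarith

lemma aux_texp {s : ℝ} (hs : 0 ≤ s) : s * Real.exp (-s) ≤ 1 := by
  have h1 : s + 1 ≤ Real.exp s := Real.add_one_le_exp s
  have h2 : 0 < Real.exp s := Real.exp_pos s
  rw [Real.exp_neg]
  rw [mul_inv_le_iff₀ h2, one_mul]
  linarith

lemma aux_e7 {nx t ny A dR : ℝ} (hnx : 0 ≤ nx) (hny : 0 ≤ ny) (ht : 0 ≤ t)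
    (h10 : nx ≤ t + ny) (h11 : ny ≤ A * Real.sqrt dR) (hA : 0 ≤ A) (hd : 0 ≤ dR) :
    nx ^ 2 ≤ 2 * t ^ 2 + 2 * A ^ 2 * dR := by
  have h12 : Real.sqrt dR ^ 2 = dR := Real.sq_sqrt hd
  have h13 : nx ^ 2 ≤ (t + ny) ^ 2 := by nlinarith
  have h14 : ny ^ 2 ≤ A ^ 2 * dR := by nlinarith [Real.sqrt_nonneg dR]
  nlinarith [sq_nonneg (t - ny)]

lemma aux_e8 {αx t dR A γ : ℝ} (hα : 0 < αx) (hd : 1 ≤ dR) (ht : 0 ≤ t)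
    (hγ : γ = αx / (8 * dR)) (hA : 0 ≤ A) :
    (2 * t ^ 2 + 2 * A ^ 2 * dR) * Real.exp (-(γ * t ^ 2)) ≤ (32 / αx + 2 * A ^ 2) * dR := by
  have hdpos : 0 < dR := by linarith
  have hγpos : 0 < γ := by rw [hγ]; positivity
  have h13 : γ * t ^ 2 * Real.exp (-(γ * t ^ 2)) ≤ 1 := aux_texp (by positivity)
  have hexple : Real.exp (-(γ * t ^ 2)) ≤ 1 := by
    apply Real.exp_le_one_iff.mpr
    nlinarith [sq_nonneg t]
  have hexppos : 0 < Real.exp (-(γ * t ^ 2)) := Real.exp_pos _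
  have h14 : t ^ 2 * Real.exp (-(γ * t ^ 2)) ≤ 8 * dR / αx := by
    have hinv : 1 / γ = 8 * dR / αx := by
      rw [hγ]
      field_simp
    rw [← hinv, le_div_iff₀ hγpos]
    nlinarith [h13]
  have hAd : 0 ≤ 2 * A ^ 2 * dR := by positivity
  have h15 : 2 * A ^ 2 * dR * Real.exp (-(γ * t ^ 2)) ≤ 2 * A ^ 2 * dR :=
    mul_le_of_le_one_right hAd hexple
  have h14' : t ^ 2 * Real.exp (-(γ * t ^ 2)) * αx ≤ 8 * dR := by
    rw [← le_div_iff₀ hα]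
    exact h14
  have key : ((2 * t ^ 2 + 2 * A ^ 2 * dR) * Real.exp (-(γ * t ^ 2))) * αx
      ≤ ((32 / αx + 2 * A ^ 2) * dR) * αx := by
    have hexpR : ((32 / αx + 2 * A ^ 2) * dR) * αx = 32 * dR + 2 * A ^ 2 * dR * αx := by
      field_simp
    rw [hexpR]
    have h16 : 2 * A ^ 2 * dR * Real.exp (-(γ * t ^ 2)) * αx ≤ 2 * A ^ 2 * dR * αx :=
      mul_le_mul_of_nonneg_right h15 hα.le
    nlinarith [h14', h16, hdpos, hexppos, sq_nonneg t]
  exact le_of_mul_le_mul_right key hα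

end Helpers

/-- Dimension-sharp second-moment bound for weakly log-concave densities whose convex
part is minimized at Gaussian scale `O(√d)`: `∫ ‖x‖² p*(x) dx ≤ C d`. -/
theorem stmt17 (α β K A : ℝ) (hα : 0 < α) (hβ : β ∈ Set.Ioc (0 : ℝ) 1)
    (hK : 0 < K) (hA : 0 < A) :
    ∃ C : ℝ, 0 < C ∧
      ∀ (d : ℕ), 1 ≤ d →
      ∀ (u a pstar : EuclideanSpace ℝ (Fin d) → ℝ) (Z : ℝ)
        (y₀ : EuclideanSpace ℝ (Fin d)),
        ContDiff ℝ 2 u →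
        (∀ y h, α * ‖h‖ ^ 2 ≤ iteratedFDeriv ℝ 2 u y ![h, h]) →
        (∀ x y, |a x - a y| ≤ K * ‖x - y‖ ^ β) →
        gradient u y₀ = 0 →
        ‖y₀‖ ≤ A * Real.sqrt d →
        Z = ∫ y, Real.exp (-u y + a y) →
        (∀ y, pstar y = Real.exp (-u y + a y) / Z) →
        ∫⁻ x, ENNReal.ofReal (‖x‖ ^ 2 * pstar x) ≤ ENNReal.ofReal (C * d) := by
  obtain ⟨hβ0, hβ1⟩ := hβ
  set C1 : ℝ := (32 / α + 2 * A ^ 2) * Real.exp (K + 2 * K ^ 2 / α) with hC1def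
  have hC1 : 0 < C1 := by positivity
  refine ⟨2 * C1, by positivity, ?_⟩
  intro d hd u a pstar Z y₀ hu hess ha hgrad hy₀ hZ hp
  have hdR : (1:ℝ) ≤ (d:ℝ) := by exact_mod_cast hd
  have hdpos : (0:ℝ) < (d:ℝ) := by linarith
  set f : EuclideanSpace ℝ (Fin d) → ℝ := fun y => Real.exp (-u y + a y) with hfdef
  have hacont : Continuous a := aux_cont_a hβ0 ha
  have hfc : Continuous f := Real.continuous_exp.comp ((hu.continuous.neg).add hacont)
  have hfpos : ∀ x, 0 < f x := fun x => Real.exp_pos _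
  -- fderiv of u vanishes at y₀
  have hgradf : fderiv ℝ u y₀ = 0 := by
    have h := congrArg (InnerProductSpace.toDual ℝ (EuclideanSpace ℝ (Fin d))) hgrad
    simpa [gradient] using h
  -- convexity consequence
  have huineq : ∀ (x : EuclideanSpace ℝ (Fin d)) {l : ℝ}, 0 ≤ l → l ≤ 1 →
      u (y₀ + l • (x - y₀)) + α / 2 * (1 - l ^ 2) * ‖x - y₀‖ ^ 2 ≤ u x := by
    intro x l hl0 hl1
    have h := aux_convex hu hess hgradf (x - y₀) hl0 hl1
    have hx : y₀ + (x - y₀) = x := by abel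
    rwa [hx] at h
  -- pointwise Gaussian upper bound for f
  have hKt : ∀ t : ℝ, 0 ≤ t → K * t ≤ α / 8 * t ^ 2 + 2 * K ^ 2 / α := by
    intro t ht
    have h8 : (0:ℝ) < 8 * α := by positivity
    have key : 8 * α * (K * t) ≤ 8 * α * (α / 8 * t ^ 2 + 2 * K ^ 2 / α) := by
      have hexp : 8 * α * (α / 8 * t ^ 2 + 2 * K ^ 2 / α) = α ^ 2 * t ^ 2 + 16 * K ^ 2 := by
        field_simp
        ring
      rw [hexp]
      nlinarith [sq_nonneg (α * t - 4 * K)]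
    exact le_of_mul_le_mul_left key h8
  have haub : ∀ x : EuclideanSpace ℝ (Fin d), a x ≤ a y₀ + K + K * ‖x - y₀‖ := by
    intro x
    have h1 := (abs_le.mp (ha x y₀)).2
    have h2 : ‖x - y₀‖ ^ β ≤ 1 + ‖x - y₀‖ := aux_rpow_le hβ0 hβ1 (norm_nonneg _)
    nlinarith [norm_nonneg (x - y₀)]
  have hub : ∀ x : EuclideanSpace ℝ (Fin d),
      f x ≤ Real.exp (-u y₀ + a y₀ + K + 2 * K ^ 2 / α) *
        Real.exp (-(α/4) * ‖x - y₀‖ ^ 2) := by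
    intro x
    rw [← Real.exp_add]
    apply Real.exp_le_exp.mpr
    have h1 := huineq x (le_refl (0:ℝ)) (by norm_num)
    simp only [zero_smul, add_zero] at h1
    have h2 := haub x
    have h3 := hKt ‖x - y₀‖ (norm_nonneg _)
    nlinarith [sq_nonneg ‖x - y₀‖]
  have hfint : Integrable f := by
    apply Integrable.mono'
      ((aux_gauss_int (show (0:ℝ) < α/4 by positivity) y₀).const_mul
        (Real.exp (-u y₀ + a y₀ + K + 2 * K ^ 2 / α)))
      hfc.aestronglyMeasurable
    refine ae_of_all _ fun x => ?_
    rw [Real.norm_eq_abs, abs_of_pos (hfpos x)]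
    exact hub x
  have hZpos : 0 < Z := by
    rw [hZ]
    refine (integral_pos_iff_support_of_nonneg (fun x => (hfpos x).le) hfint).mpr ?_
    have hsup : Function.support f = univ := eq_univ_of_forall fun x => (hfpos x).ne'
    rw [hsup]
    exact isOpen_univ.measure_pos volume univ_nonempty
  have hlint : ∫⁻ x, ENNReal.ofReal (f x) = ENNReal.ofReal Z := by
    rw [hZ]
    exact (ofReal_integral_eq_lintegral_ofReal hfint
      (ae_of_all _ fun x => (hfpos x).le)).symm
  -- the contraction factor
  obtain ⟨l, hldef⟩ : ∃ l : ℝ, l = 1 - 1 / (2 * (d:ℝ)) := ⟨_, rfl⟩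
  have hlhalf : (1:ℝ)/2 ≤ l := by
    rw [hldef]
    have : 1 / (2 * (d:ℝ)) ≤ 1/2 := by
      apply div_le_div_of_nonneg_left (by norm_num) (by norm_num) (by linarith)
    linarith
  have hl0 : (0:ℝ) ≤ l := by linarith
  have hl1 : l ≤ 1 := by
    rw [hldef]
    have : 0 < 1 / (2 * (d:ℝ)) := by positivity
    linarith
  have hlne : l ≠ 0 := by intro h; rw [h] at hlhalf; norm_num at hlhalf
  have hone_sub_l : 1 - l = 1 / (2 * (d:ℝ)) := by rw [hldef]; ring
  -- Bernoulli: l^d ≥ 1/2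
  have hld : (1:ℝ)/2 ≤ l ^ d := by
    have hber := one_add_mul_le_pow (a := -(1 / (2 * (d:ℝ)))) (by
      have : 0 < 1 / (2 * (d:ℝ)) := by positivity
      linarith) d
    have heq : 1 + (d:ℝ) * -(1 / (2 * (d:ℝ))) = 1/2 := by
      field_simp
      ring
    have heq2 : (1 + -(1 / (2 * (d:ℝ)))) = l := by rw [hldef]; ring
    rw [heq, heq2] at hber
    exact hber
  have hldpos : (0:ℝ) < l ^ d := by positivity
  -- key pointwise bound
  have hkey : ∀ x : EuclideanSpace ℝ (Fin d),
      ‖x‖ ^ 2 * f x ≤ (C1 * d) * f (y₀ + l • (x - y₀)) := by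
    intro x
    set t : ℝ := ‖x - y₀‖ with htdef
    have ht : 0 ≤ t := norm_nonneg _
    set Tx : EuclideanSpace ℝ (Fin d) := y₀ + l • (x - y₀) with hTxdef
    -- convexity bound
    have e1 : u Tx + α / 2 * (1 - l ^ 2) * t ^ 2 ≤ u x := huineq x hl0 hl1
    -- Hölder bound
    have hnorm : ‖x - Tx‖ = (1 - l) * t := by
      have hsub : x - Tx = (1 - l) • (x - y₀) := by
        rw [hTxdef, sub_smul, one_smul]; abel
      rw [hsub, norm_smul, Real.norm_eq_abs, abs_of_nonneg (by linarith)]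
    have e2 : a x - a Tx ≤ K * ((1 - l) * t) ^ β := by
      have := (abs_le.mp (ha x Tx)).2
      rwa [hnorm] at this
    have e3 : ((1 - l) * t) ^ β ≤ 1 + (1 - l) * t :=
      aux_rpow_le hβ0 hβ1 (mul_nonneg (by linarith) ht)
    have e4 : K * ((1 - l) * t) ≤ (1 - l) * (α / 8 * t ^ 2) + 2 * K ^ 2 / α := by
      have h5 := hKt t ht
      have h6 : 0 ≤ 1 - l := by linarith
      have h7 : 0 ≤ 2 * K ^ 2 / α := by positivity
      nlinarith
    -- exponent bound
    obtain ⟨γ, hγdef⟩ : ∃ γ : ℝ, γ = α / (8 * (d:ℝ)) := ⟨_, rfl⟩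
    have hγpos : 0 < γ := by rw [hγdef]; positivity
    have hγeq : α / 4 * ((1 - l) * t ^ 2) = γ * t ^ 2 := by
      have h4d : α / 4 * (1 / (2 * (d:ℝ))) = γ := by
        rw [hγdef, div_mul_div_comm]
        congr 1
        · ring
        · ring
      calc α / 4 * ((1 - l) * t ^ 2) = (α / 4 * (1 / (2 * (d:ℝ)))) * t ^ 2 := by
            rw [hone_sub_l]; ring
        _ = γ * t ^ 2 := by rw [h4d]
    have e5 : -u x + a x ≤
        (-u Tx + a Tx) + (K + 2 * K ^ 2 / α) - α / 4 * ((1 - l) * t ^ 2) := by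
      have h8 : 1 - l ≤ 1 - l ^ 2 := by nlinarith
      have h9 : 0 ≤ t ^ 2 := sq_nonneg t
      have h8a : 0 < α / 4 := by positivity
      nlinarith [e1, e2, e3, e4, mul_le_mul_of_nonneg_left h8 (le_of_lt h8a)]
    have e5' : -u x + a x ≤
        (-u Tx + a Tx) + (K + 2 * K ^ 2 / α) - γ * t ^ 2 := by
      rw [← hγeq]
      exact e5
    have e6 : f x ≤ Real.exp (K + 2 * K ^ 2 / α) *
        Real.exp (-(γ * t ^ 2)) * f Tx := by
      have hfx : f x = Real.exp (-u x + a x) := rfl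
      have hfTx : f Tx = Real.exp (-u Tx + a Tx) := rfl
      rw [hfx, hfTx, ← Real.exp_add, ← Real.exp_add]
      exact Real.exp_le_exp.mpr (by linarith)
    -- norm bound
    have e7 : ‖x‖ ^ 2 ≤ 2 * t ^ 2 + 2 * A ^ 2 * d := by
      have h10 : ‖x‖ ≤ t + ‖y₀‖ := by
        calc ‖x‖ = ‖(x - y₀) + y₀‖ := by rw [sub_add_cancel]
        _ ≤ ‖x - y₀‖ + ‖y₀‖ := norm_add_le _ _
      exact aux_e7 (norm_nonneg x) (norm_nonneg y₀) ht h10 hy₀ hA.le (by positivity)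
    -- scalar factor bound
    have e8 : (2 * t ^ 2 + 2 * A ^ 2 * d) *
        Real.exp (-(γ * t ^ 2)) ≤ (32 / α + 2 * A ^ 2) * d :=
      aux_e8 hα hdR ht hγdef hA.le
    calc ‖x‖ ^ 2 * f x
        ≤ (2 * t ^ 2 + 2 * A ^ 2 * d) *
          (Real.exp (K + 2 * K ^ 2 / α) *
            Real.exp (-(γ * t ^ 2)) * f Tx) := by
          apply mul_le_mul e7 e6 (by positivity) (by positivity)
      _ = ((2 * t ^ 2 + 2 * A ^ 2 * d) * Real.exp (-(γ * t ^ 2))) *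
            Real.exp (K + 2 * K ^ 2 / α) * f Tx := by ring
      _ ≤ ((32 / α + 2 * A ^ 2) * d) * Real.exp (K + 2 * K ^ 2 / α) * f Tx := by
          apply mul_le_mul_of_nonneg_right _ (hfpos Tx).le
          exact mul_le_mul_of_nonneg_right e8 (Real.exp_pos _).le
      _ = (C1 * d) * f Tx := by rw [hC1def]; ring
  -- lintegral chain
  have hmeas1 : Measurable fun x => ENNReal.ofReal (f x) :=
    ENNReal.measurable_ofReal.comp hfc.measurable
  have hTeq : ∀ x : EuclideanSpace ℝ (Fin d),
      y₀ + l • (x - y₀) = (y₀ - l • y₀) + l • x := by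
    intro x; rw [smul_sub]; abel
  have hchange : ∫⁻ x, ENNReal.ofReal (f (y₀ + l • (x - y₀)))
      = ENNReal.ofReal |((l:ℝ) ^ d)⁻¹| * ENNReal.ofReal Z := by
    calc ∫⁻ x, ENNReal.ofReal (f (y₀ + l • (x - y₀)))
        = ∫⁻ x, ENNReal.ofReal (f ((y₀ - l • y₀) + l • x)) := by
          apply lintegral_congr; intro x; rw [hTeq x]
      _ = ENNReal.ofReal |((l:ℝ) ^ d)⁻¹| * ∫⁻ x, ENNReal.ofReal (f x) :=
          aux_scale _ hmeas1 hlne _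
      _ = _ := by rw [hlint]
  have habs : |((l:ℝ) ^ d)⁻¹| ≤ 2 := by
    rw [abs_of_nonneg (by positivity)]
    rw [inv_le_comm₀ hldpos (by norm_num : (0:ℝ) < 2)]
    calc (2:ℝ)⁻¹ = 1/2 := by norm_num
    _ ≤ l ^ d := hld
  have hZne : ENNReal.ofReal Z ≠ 0 := (ENNReal.ofReal_pos.mpr hZpos).ne'
  have hZnetop : ENNReal.ofReal Z ≠ ⊤ := ENNReal.ofReal_ne_top
  have hCd : 0 ≤ C1 * (d:ℝ) := by positivity
  calc ∫⁻ x, ENNReal.ofReal (‖x‖ ^ 2 * pstar x)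
      = ∫⁻ x, ENNReal.ofReal (‖x‖ ^ 2 * f x) * (ENNReal.ofReal Z)⁻¹ := by
        apply lintegral_congr; intro x
        rw [hp x, ← mul_div_assoc, ENNReal.ofReal_div_of_pos hZpos, div_eq_mul_inv]
    _ = (∫⁻ x, ENNReal.ofReal (‖x‖ ^ 2 * f x)) * (ENNReal.ofReal Z)⁻¹ :=
        lintegral_mul_const' _ _ (ENNReal.inv_ne_top.mpr hZne)
    _ ≤ (ENNReal.ofReal (C1 * d) * ∫⁻ x, ENNReal.ofReal (f (y₀ + l • (x - y₀))))
          * (ENNReal.ofReal Z)⁻¹ := by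
        gcongr
        calc ∫⁻ x, ENNReal.ofReal (‖x‖ ^ 2 * f x)
            ≤ ∫⁻ x, ENNReal.ofReal ((C1 * d) * f (y₀ + l • (x - y₀))) :=
              lintegral_mono fun x => ENNReal.ofReal_le_ofReal (hkey x)
          _ = ∫⁻ x, ENNReal.ofReal (C1 * d) * ENNReal.ofReal (f (y₀ + l • (x - y₀))) := by
              apply lintegral_congr; intro x
              rw [ENNReal.ofReal_mul hCd]
          _ = ENNReal.ofReal (C1 * d) * ∫⁻ x, ENNReal.ofReal (f (y₀ + l • (x - y₀))) :=
              lintegral_const_mul' _ _ ENNReal.ofReal_ne_top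
    _ = ENNReal.ofReal (C1 * d) * (ENNReal.ofReal |((l:ℝ) ^ d)⁻¹| * ENNReal.ofReal Z)
          * (ENNReal.ofReal Z)⁻¹ := by rw [hchange]
    _ ≤ ENNReal.ofReal (C1 * d) * (ENNReal.ofReal 2 * ENNReal.ofReal Z)
          * (ENNReal.ofReal Z)⁻¹ := by
        gcongr
    _ = (ENNReal.ofReal (C1 * d) * ENNReal.ofReal 2)
          * (ENNReal.ofReal Z * (ENNReal.ofReal Z)⁻¹) := by ring
    _ = ENNReal.ofReal (C1 * d) * ENNReal.ofReal 2 := by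
        rw [ENNReal.mul_inv_cancel hZne hZnetop, mul_one]
    _ = ENNReal.ofReal (2 * C1 * d) := by
        rw [← ENNReal.ofReal_mul hCd]
        congr 1
        ring
end
end
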